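/- Let F be a field and m ≥ 2. Suppose C is an m×m matrix over F[X] such that (i) there exists an m×m matrix E over F[X] with C·E = I_m, and (ii) the entrywise evaluation of C at X = 1 equals I_m. Then there exist r ∈ ℕ, m×m matrices N_1, …, N_r over F with N_i² = 0 for each i, and positive integers k_1, …, k_r, such that C = (I_m − N̂_r + N̂_r·X^{k_r}) ⋯ (I_m − N̂_2 + N̂_2·X^{k_2})·(I_m − N̂_1 + N̂_1·X^{k_1}) and E = (I_m + N̂_1 − N̂_1·X^{k_1})·(I_m + N̂_2 − N̂_2·X^{k_2}) ⋯ (I_m + N̂_r − N̂_r·X^{k_r}). -/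

import Mathlib

open Polynomial


open Polynomial

namespace PseudoId

variable {F : Type*} [Field F] {m : ℕ}

/-- primitive factor -/
noncomputable def fac (p : Matrix (Fin m) (Fin m) F × ℕ) : Matrix (Fin m) (Fin m) F[X] :=
  1 - p.1.map Polynomial.C + (X : F[X]) ^ p.2 • p.1.map Polynomial.C

/-- inverse primitive factor -/
noncomputable def fac' (p : Matrix (Fin m) (Fin m) F × ℕ) : Matrix (Fin m) (Fin m) F[X] :=
  1 + p.1.map Polynomial.C - (X : F[X]) ^ p.2 • p.1.map Polynomial.C

lemma fac_eq (p : Matrix (Fin m) (Fin m) F × ℕ) :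
    fac p = 1 + ((X : F[X]) ^ p.2 - 1) • p.1.map Polynomial.C := by
  unfold fac; rw [sub_smul, one_smul]; abel

lemma fac'_eq (p : Matrix (Fin m) (Fin m) F × ℕ) :
    fac' p = 1 - ((X : F[X]) ^ p.2 - 1) • p.1.map Polynomial.C := by
  unfold fac'; rw [sub_smul, one_smul]; abel

lemma one_add_smul_mul (a b : F[X]) (M : Matrix (Fin m) (Fin m) F[X]) (hM : M * M = 0) :
    (1 + a • M) * (1 + b • M) = 1 + (a + b) • M := by
  have h0 : (a • M) * (b • M) = 0 := by
    rw [Matrix.smul_mul, Matrix.mul_smul, hM, smul_zero, smul_zero]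
  rw [mul_add, add_mul, add_mul, mul_one, one_mul, mul_one, h0, add_zero, add_smul, add_assoc]

lemma mapC_mul (P Q : Matrix (Fin m) (Fin m) F) :
    (P * Q).map (Polynomial.C : F → F[X]) = P.map Polynomial.C * Q.map Polynomial.C :=
  Matrix.map_mul (f := (Polynomial.C : F →+* F[X]))

lemma mapC_one : ((1 : Matrix (Fin m) (Fin m) F).map (Polynomial.C : F → F[X])) = 1 :=
  Matrix.map_one _ (map_zero _) (map_one _)

lemma mapC_smul (c : F) (N : Matrix (Fin m) (Fin m) F) :
    (c • N).map (Polynomial.C : F → F[X]) = Polynomial.C c • N.map Polynomial.C := by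
  ext i j; simp [Matrix.map_apply]

lemma sq_map (N : Matrix (Fin m) (Fin m) F) (hN : N ^ 2 = 0) :
    (N.map (Polynomial.C : F → F[X])) * (N.map Polynomial.C) = 0 := by
  rw [← mapC_mul, ← pow_two, hN]
  ext i j; simp [Matrix.map_apply]

/-- Being a product of primitive factors. -/
def IsProd (A : Matrix (Fin m) (Fin m) F[X]) : Prop :=
  ∃ L : List (Matrix (Fin m) (Fin m) F × ℕ),
    (∀ p ∈ L, p.1 ^ 2 = 0 ∧ 1 ≤ p.2) ∧ A = (L.map fac).prod

lemma IsProd.one : IsProd (1 : Matrix (Fin m) (Fin m) F[X]) := ⟨[], by simp, by simp⟩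

lemma IsProd.mul {A B : Matrix (Fin m) (Fin m) F[X]} (hA : IsProd A) (hB : IsProd B) :
    IsProd (A * B) := by
  obtain ⟨L₁, h₁, rfl⟩ := hA
  obtain ⟨L₂, h₂, rfl⟩ := hB
  exact ⟨L₁ ++ L₂, by
    intro p hp
    rcases List.mem_append.mp hp with h | h
    exacts [h₁ p h, h₂ p h], by rw [List.map_append, List.prod_append]⟩

lemma isProd_single (N : Matrix (Fin m) (Fin m) F) (hN : N ^ 2 = 0) (c : F) (k : ℕ) (hk : 1 ≤ k) :
    IsProd (1 + (Polynomial.C c * ((X : F[X]) ^ k - 1)) • N.map Polynomial.C) := by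
  refine ⟨[(c • N, k)], ?_, ?_⟩
  · rintro p hp
    simp only [List.mem_singleton] at hp
    subst hp
    exact ⟨by rw [_root_.smul_pow, hN, smul_zero], hk⟩
  · simp only [List.map_cons, List.map_nil, List.prod_cons, List.prod_nil, mul_one]
    rw [fac_eq]
    simp only [mapC_smul]
    rw [smul_smul, mul_comm]

lemma isProd_sum (N : Matrix (Fin m) (Fin m) F) (hN : N ^ 2 = 0) (s : Finset ℕ)
    (hs : ∀ k ∈ s, 1 ≤ k) (c : ℕ → F) :
    IsProd (1 + (∑ k ∈ s, Polynomial.C (c k) * ((X : F[X]) ^ k - 1)) • N.map Polynomial.C) := by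
  classical
  revert hs
  induction s using Finset.induction_on with
  | empty => intro _; simpa using IsProd.one (m := m) (F := F)
  | @insert a s ha ih =>
    intro hs
    rw [Finset.sum_insert ha, ← one_add_smul_mul _ _ _ (sq_map N hN)]
    exact (isProd_single N hN (c a) a (hs a (Finset.mem_insert_self a s))).mul
      (ih fun k hk => hs k (Finset.mem_insert_of_mem hk))

lemma isProd_gen (N : Matrix (Fin m) (Fin m) F) (hN : N ^ 2 = 0) (f : F[X])
    (hf : f.eval 1 = 0) : IsProd (1 + f • N.map Polynomial.C) := by
  classical
  have h1 : ∑ k ∈ f.support, Polynomial.C (f.coeff k) * (X : F[X]) ^ k = f := by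
    conv_rhs => rw [f.as_sum_support]
    exact Finset.sum_congr rfl fun k _ => C_mul_X_pow_eq_monomial
  have h2 : ∑ k ∈ f.support, Polynomial.C (f.coeff k) = 0 := by
    have he : ∑ k ∈ f.support, f.coeff k = f.eval 1 := by
      rw [eval_eq_sum, Polynomial.sum]
      exact Finset.sum_congr rfl fun k _ => by rw [one_pow, mul_one]
    rw [← map_sum, he, hf, map_zero]
  have hdecomp : f = ∑ k ∈ f.support.erase 0,
      Polynomial.C (f.coeff k) * ((X : F[X]) ^ k - 1) := by
    rw [Finset.sum_erase _ (by simp)]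
    simp only [mul_sub, mul_one, Finset.sum_sub_distrib, h1, h2, sub_zero]
  rw [hdecomp]
  exact isProd_sum N hN _ (fun k hk => Nat.one_le_iff_ne_zero.mpr (Finset.ne_of_mem_erase hk)) _


lemma conj_fac (P Q : Matrix (Fin m) (Fin m) F) (hPQ : P * Q = 1)
    (p : Matrix (Fin m) (Fin m) F × ℕ) :
    P.map Polynomial.C * fac p * Q.map Polynomial.C = fac (P * p.1 * Q, p.2) := by
  rw [fac_eq, fac_eq]
  simp only [mul_add, add_mul, mul_one, one_mul, Matrix.mul_smul, Matrix.smul_mul]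
  rw [← mapC_mul, hPQ, mapC_one, mapC_mul, mapC_mul, Matrix.mul_assoc]

lemma conj_prod (P Q : Matrix (Fin m) (Fin m) F) (hPQ : P * Q = 1) (hQP : Q * P = 1) :
    ∀ L : List (Matrix (Fin m) (Fin m) F × ℕ),
      P.map Polynomial.C * (L.map fac).prod * Q.map Polynomial.C
        = ((L.map fun p => (P * p.1 * Q, p.2)).map fac).prod
  | [] => by
    simp only [List.map_nil, List.prod_nil, Matrix.mul_one]
    rw [← mapC_mul, hPQ, mapC_one]
  | p :: t => by
    have h1 : Q.map Polynomial.C * P.map Polynomial.C = (1 : Matrix (Fin m) (Fin m) F[X]) := by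
      rw [← mapC_mul, hQP, mapC_one]
    have h2 : ∀ x : Matrix (Fin m) (Fin m) F[X],
        Q.map Polynomial.C * (P.map Polynomial.C * x) = x := fun x => by
      rw [← Matrix.mul_assoc, h1, Matrix.one_mul]
    rw [List.map_cons, List.map_cons, List.map_cons, List.prod_cons, List.prod_cons,
      ← conj_prod P Q hPQ hQP t, ← conj_fac P Q hPQ p]
    simp only [Matrix.mul_assoc, h2]

lemma IsProd.conj {A : Matrix (Fin m) (Fin m) F[X]} (h : IsProd A)
    (P Q : Matrix (Fin m) (Fin m) F) (hPQ : P * Q = 1) (hQP : Q * P = 1) :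
    IsProd (P.map Polynomial.C * A * Q.map Polynomial.C) := by
  obtain ⟨L, hL, rfl⟩ := h
  refine ⟨L.map fun p => (P * p.1 * Q, p.2), ?_, ?_⟩
  · rintro p hp
    simp only [List.mem_map] at hp
    obtain ⟨q, hq, rfl⟩ := hp
    refine ⟨?_, (hL q hq).2⟩
    have h2 : q.1 * q.1 = 0 := by rw [← pow_two]; exact (hL q hq).1
    have key : P * q.1 * Q * (P * q.1 * Q) = P * (q.1 * (Q * P) * q.1) * Q := by noncomm_ring
    rw [pow_two, key, hQP, Matrix.mul_one, h2, Matrix.mul_zero, Matrix.zero_mul]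
  · exact conj_prod P Q hPQ hQP L

lemma fac_eval_one (p : Matrix (Fin m) (Fin m) F × ℕ) :
    (fac p).map (Polynomial.eval (1 : F)) = 1 := by
  ext i j
  by_cases h : i = j <;>
    simp [fac, Matrix.map_apply, Matrix.add_apply, Matrix.sub_apply, Matrix.smul_apply,
      Matrix.one_apply, h]

lemma IsProd.eval_one {A : Matrix (Fin m) (Fin m) F[X]} (h : IsProd A) :
    A.map (Polynomial.eval (1 : F)) = 1 := by
  obtain ⟨L, hL, rfl⟩ := h
  clear hL
  induction L with
  | nil => simpa using Matrix.map_one _ (by simp) (by simp)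
  | cons p t ih =>
    rw [List.map_cons, List.prod_cons, ← Polynomial.coe_evalRingHom,
      Matrix.map_mul (f := Polynomial.evalRingHom (1 : F)), Polynomial.coe_evalRingHom,
      fac_eval_one, ih, Matrix.one_mul]

/-- Generators for the elimination stage: transvections and invertible constant matrices. -/
def SGen : Set (Matrix (Fin m) (Fin m) F[X]) :=
  {A | (∃ i j : Fin m, i ≠ j ∧ ∃ f : F[X],
          A = 1 + f • (Matrix.single i j (1 : F)).map Polynomial.C) ∨
       (∃ P Q : Matrix (Fin m) (Fin m) F, P * Q = 1 ∧ A = P.map Polynomial.C)}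

lemma std_sq (i j : Fin m) (hij : i ≠ j) : (Matrix.single i j (1 : F)) ^ 2 = 0 := by
  rw [pow_two]
  exact Matrix.single_mul_single_of_ne 1 i j i hij.symm 1

lemma mapC_one_add_std (i j : Fin m) (a : F) :
    ((1 + Matrix.single i j a : Matrix (Fin m) (Fin m) F).map Polynomial.C)
      = 1 + Polynomial.C a • (Matrix.single i j (1 : F)).map Polynomial.C := by
  ext i' j'
  by_cases h : i = i' ∧ j = j' <;>
    by_cases h2 : i' = j' <;>
    simp [Matrix.map_apply, Matrix.add_apply, Matrix.smul_apply, Matrix.one_apply,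
      Matrix.single, apply_ite Polynomial.C, h, h2]

lemma one_add_std_mul_one_sub_std (i j : Fin m) (hij : i ≠ j) (a : F) :
    (1 + Matrix.single i j a) * (1 - Matrix.single i j a)
      = (1 : Matrix (Fin m) (Fin m) F) := by
  have h0 : Matrix.single i j a * Matrix.single i j a = 0 :=
    Matrix.single_mul_single_of_ne a i j i hij.symm a
  rw [mul_sub, mul_one, add_mul, one_mul, h0, add_zero]
  abel

lemma closure_isProd {A : Matrix (Fin m) (Fin m) F[X]} (hA : A ∈ Submonoid.closure SGen) :
    ∃ (G : Matrix (Fin m) (Fin m) F[X]) (P Q : Matrix (Fin m) (Fin m) F),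
      IsProd G ∧ P * Q = 1 ∧ Q * P = 1 ∧ A = G * P.map Polynomial.C := by
  induction hA using Submonoid.closure_induction with
  | one => exact ⟨1, 1, 1, IsProd.one, by simp, by simp, by rw [mapC_one, Matrix.mul_one]⟩
  | mem s hs =>
    rcases hs with ⟨i, j, hij, f, rfl⟩ | ⟨P, Q, hPQ, rfl⟩
    · set a := f.eval 1 with ha
      refine ⟨1 + (f - Polynomial.C a) • (Matrix.single i j (1 : F)).map Polynomial.C,
          1 + Matrix.single i j a, 1 - Matrix.single i j a, ?_, ?_, ?_, ?_⟩
      · exact isProd_gen _ (std_sq i j hij) _ (by simp [ha])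
      · exact one_add_std_mul_one_sub_std i j hij a
      · exact mul_eq_one_comm.mp (one_add_std_mul_one_sub_std i j hij a)
      · rw [mapC_one_add_std, one_add_smul_mul _ _ _ (sq_map _ (std_sq i j hij)),
          sub_add_cancel]
    · exact ⟨1, P, Q, IsProd.one, hPQ, mul_eq_one_comm.mp hPQ, by rw [Matrix.one_mul]⟩
  | mul x y hx hy ihx ihy =>
    obtain ⟨G₁, P₁, Q₁, h₁, hpq₁, hqp₁, rfl⟩ := ihx
    obtain ⟨G₂, P₂, Q₂, h₂, hpq₂, hqp₂, rfl⟩ := ihy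
    refine ⟨G₁ * (P₁.map Polynomial.C * G₂ * Q₁.map Polynomial.C), P₁ * P₂, Q₂ * Q₁,
      h₁.mul (h₂.conj P₁ Q₁ hpq₁ hqp₁), ?_, ?_, ?_⟩
    · rw [Matrix.mul_assoc P₁, ← Matrix.mul_assoc P₂, hpq₂, Matrix.one_mul, hpq₁]
    · rw [Matrix.mul_assoc Q₂, ← Matrix.mul_assoc Q₁, hqp₁, Matrix.one_mul, hqp₂]
    · have h1 : Q₁.map Polynomial.C * P₁.map Polynomial.C = (1 : Matrix (Fin m) (Fin m) F[X]) := by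
        rw [← mapC_mul, hqp₁, mapC_one]
      rw [mapC_mul]
      calc G₁ * P₁.map Polynomial.C * (G₂ * P₂.map Polynomial.C)
          = G₁ * (P₁.map Polynomial.C * G₂ * (Q₁.map Polynomial.C * P₁.map Polynomial.C)
              * P₂.map Polynomial.C) := by rw [h1, Matrix.mul_one]; noncomm_ring
        _ = G₁ * (P₁.map Polynomial.C * G₂ * Q₁.map Polynomial.C)
              * (P₁.map Polynomial.C * P₂.map Polynomial.C) := by noncomm_ring

lemma isProd_of_mem_closure {A : Matrix (Fin m) (Fin m) F[X]}
    (hA : A ∈ Submonoid.closure SGen) (h1 : A.map (Polynomial.eval (1 : F)) = 1) :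
    IsProd A := by
  obtain ⟨G, P, Q, hG, hPQ, hQP, rfl⟩ := closure_isProd hA
  have hmapP : (P.map (Polynomial.C : F → F[X])).map (Polynomial.eval (1 : F)) = P := by
    ext i j; simp [Matrix.map_apply]
  rw [← Polynomial.coe_evalRingHom, Matrix.map_mul (f := Polynomial.evalRingHom (1 : F)),
    Polynomial.coe_evalRingHom, hG.eval_one, Matrix.one_mul, hmapP] at h1
  rw [h1, mapC_one, Matrix.mul_one]
  exact hG

/-- max degree in row `i` -/
noncomputable def rdeg (C : Matrix (Fin m) (Fin m) F[X]) (i : Fin m) : ℕ :=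
  Finset.univ.sup fun j => (C i j).natDegree

/-- total degree measure -/
noncomputable def mu (C : Matrix (Fin m) (Fin m) F[X]) : ℕ := ∑ i, rdeg C i

lemma natDegree_le_rdeg (C : Matrix (Fin m) (Fin m) F[X]) (i j : Fin m) :
    (C i j).natDegree ≤ rdeg C i := by
  exact Finset.le_sup (f := fun j => (C i j).natDegree) (Finset.mem_univ j)

lemma coeff_prod_le {ι : Type*} (s : Finset ι) (f : ι → F[X]) (n : ι → ℕ)
    (h : ∀ i ∈ s, (f i).natDegree ≤ n i) :
    (∏ i ∈ s, f i).coeff (∑ i ∈ s, n i) = ∏ i ∈ s, (f i).coeff (n i) := by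
  classical
  revert h
  induction s using Finset.induction_on with
  | empty => intro _; simp
  | @insert a s ha ih =>
    intro h
    rw [Finset.prod_insert ha, Finset.sum_insert ha, Finset.prod_insert ha,
      coeff_mul_add_eq_of_natDegree_le (h a (Finset.mem_insert_self a s))
        (le_trans (natDegree_prod_le s f)
          (Finset.sum_le_sum fun i hi => h i (Finset.mem_insert_of_mem hi))),
      ih fun i hi => h i (Finset.mem_insert_of_mem hi)]

lemma coeff_det (C : Matrix (Fin m) (Fin m) F[X]) :
    (C.det).coeff (mu C)
      = Matrix.det (Matrix.of fun i j => (C i j).coeff (rdeg C i)) := by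
  classical
  rw [Matrix.det_apply', Matrix.det_apply', finset_sum_coeff]
  refine Finset.sum_congr rfl fun σ _ => ?_
  rw [show (((Equiv.Perm.sign σ : ℤ) : F[X])) = Polynomial.C ((Equiv.Perm.sign σ : ℤ) : F) from
    (Polynomial.C_eq_intCast _).symm, coeff_C_mul]
  congr 1
  have hsum : mu C = ∑ i, rdeg C (σ i) := (Equiv.sum_comp σ (rdeg C)).symm
  rw [hsum, coeff_prod_le Finset.univ _ (fun i => rdeg C (σ i))
    (fun i _ => natDegree_le_rdeg C (σ i) i)]
  rfl

lemma const_mem (C E : Matrix (Fin m) (Fin m) F[X]) (h : mu C = 0) (hCE : C * E = 1) :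
    C ∈ Submonoid.closure (SGen (F := F) (m := m)) := by
  have hd : ∀ i j, (C i j).natDegree = 0 := by
    intro i j
    have h1 : rdeg C i = 0 :=
      Finset.sum_eq_zero_iff.mp h i (Finset.mem_univ i)
    exact Nat.le_zero.mp (h1 ▸ natDegree_le_rdeg C i j)
  have hCform : C = (C.map (Polynomial.eval (0 : F))).map Polynomial.C := by
    refine Matrix.ext fun i j => ?_
    simp only [Matrix.map_apply]
    rw [← Polynomial.coeff_zero_eq_eval_zero]
    exact Polynomial.eq_C_of_natDegree_eq_zero (hd i j)
  refine Submonoid.subset_closure (Or.inr ⟨C.map (Polynomial.eval (0 : F)),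
    E.map (Polynomial.eval (0 : F)), ?_, hCform⟩)
  rw [← Polynomial.coe_evalRingHom, ← Matrix.map_mul (f := Polynomial.evalRingHom (0 : F)), hCE]
  exact Matrix.map_one _ (map_zero _) (map_one _)

/-- single-row matrix supported on row `i0` -/
noncomputable def rowM (i0 : Fin m) (u : Fin m → F[X]) : Matrix (Fin m) (Fin m) F[X] :=
  Matrix.of fun i j => if i = i0 then u j else 0

lemma rowM_add (i0 : Fin m) (u u' : Fin m → F[X]) :
    rowM i0 u + rowM i0 u' = rowM i0 (u + u') := by
  ext i j
  by_cases h : i = i0 <;> simp [rowM, h]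

lemma rowM_mul_rowM (i0 : Fin m) (u u' : Fin m → F[X]) (h : u i0 = 0) :
    rowM i0 u * rowM i0 u' = 0 := by
  ext i j
  by_cases hi : i = i0 <;>
    simp [rowM, Matrix.mul_apply, hi, ite_mul, zero_mul, Finset.sum_ite_eq', h]

lemma rowM_mul_left (i0 : Fin m) (u : Fin m → F[X]) (C : Matrix (Fin m) (Fin m) F[X]) (i j : Fin m) :
    (rowM i0 u * C) i j = if i = i0 then ∑ k, u k * C k j else 0 := by
  by_cases hi : i = i0 <;>
    simp [rowM, Matrix.mul_apply, hi, ite_mul, zero_mul]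

lemma one_add_rowM_mul (i0 : Fin m) (u u' : Fin m → F[X]) (h : u i0 = 0) :
    (1 + rowM i0 u) * (1 + rowM i0 u') = 1 + rowM i0 (u + u') := by
  rw [mul_add, add_mul, add_mul, mul_one, one_mul, mul_one, rowM_mul_rowM i0 u u' h, add_zero,
    add_assoc, rowM_add]

lemma rowM_single (i0 a : Fin m) (w : F[X]) :
    rowM i0 (fun j => if j = a then w else 0)
      = w • (Matrix.single i0 a (1 : F)).map Polynomial.C := by
  refine Matrix.ext fun i j => ?_
  simp only [rowM, Matrix.smul_apply, Matrix.map_apply, Matrix.single, Matrix.of_apply,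
    apply_ite Polynomial.C, map_zero, map_one, smul_ite, smul_zero, smul_eq_mul, mul_one]
  split_ifs with h1 h2 h3 <;> simp_all <;> simp_all [eq_comm]

lemma row_mem (i0 : Fin m) (w : Fin m → F[X]) (hw : w i0 = 0) :
    (1 + rowM i0 w) ∈ Submonoid.closure (SGen (F := F) (m := m)) := by
  classical
  have key : ∀ s : Finset (Fin m), i0 ∉ s →
      (1 + rowM i0 (fun j => if j ∈ s then w j else 0))
        ∈ Submonoid.closure (SGen (F := F) (m := m)) := by
    intro s
    induction s using Finset.induction_on with
    | empty =>
      intro _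
      have : rowM i0 (fun j => if j ∈ (∅ : Finset (Fin m)) then w j else 0) = 0 := by
        ext i j
        simp [rowM]
      rw [this, add_zero]
      exact one_mem _
    | @insert a s ha ih =>
      intro hins
      have hai0 : a ≠ i0 := fun h => hins (h ▸ Finset.mem_insert_self a s)
      have hi0s : i0 ∉ s := fun h => hins (Finset.mem_insert_of_mem h)
      have hfun : (fun j => if j ∈ s then w j else 0) + (fun j => if j = a then w a else 0)
          = fun j => if j ∈ insert a s then w j else 0 := by
        funext j
        by_cases hj : j ∈ s <;> by_cases hja : j = a <;>
          simp_all [Finset.mem_insert]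
      have hs0 : (if i0 ∈ s then w i0 else 0) = 0 := by
        simp [hi0s]
      have := one_add_rowM_mul i0 (fun j => if j ∈ s then w j else 0)
        (fun j => if j = a then w a else 0) hs0
      rw [hfun] at this
      rw [← this]
      refine mul_mem (ih hi0s) (Submonoid.subset_closure (Or.inl ⟨i0, a, ?_, w a, ?_⟩))
      · exact fun h => hai0 h.symm
      · rw [rowM_single]
  have := key (Finset.univ.erase i0) (Finset.notMem_erase i0 _)
  have heq : (fun j => if j ∈ Finset.univ.erase i0 then w j else 0) = w := by
    funext j
    by_cases hj : j = i0 <;> simp [Finset.mem_erase, hj, hw]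
  rwa [heq] at this

lemma reduce (C E : Matrix (Fin m) (Fin m) F[X]) (hCE : C * E = 1) (hmu : 1 ≤ mu C) :
    ∃ T' C' E' : Matrix (Fin m) (Fin m) F[X], C = T' * C' ∧ C' * E' = 1 ∧ mu C' < mu C ∧
      T' ∈ Submonoid.closure (SGen (F := F) (m := m)) := by
  classical
  set d := rdeg C with hd
  set L : Matrix (Fin m) (Fin m) F := Matrix.of (fun i j => (C i j).coeff (d i)) with hL
  have hdetu : IsUnit C.det :=
    IsUnit.of_mul_eq_one E.det (by rw [← Matrix.det_mul, hCE, Matrix.det_one])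
  obtain ⟨r, hr, hrC⟩ := Polynomial.isUnit_iff.mp hdetu
  have hcoeff : (C.det).coeff (mu C) = 0 := by
    rw [← hrC, Polynomial.coeff_C, if_neg (by omega : ¬ mu C = 0)]
  have hdetL : L.det = 0 := by
    have h := coeff_det C
    rw [← hd] at h
    rw [← hL] at h
    calc L.det = (C.det).coeff (mu C) := h.symm
      _ = 0 := hcoeff
  obtain ⟨v, hv0, hvL⟩ := Matrix.exists_vecMul_eq_zero_iff.mpr hdetL
  have hsne : (Finset.univ.filter fun i => v i ≠ 0).Nonempty := by
    obtain ⟨i, hi⟩ := Function.ne_iff.mp hv0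
    exact ⟨i, Finset.mem_filter.mpr ⟨Finset.mem_univ i, hi⟩⟩
  obtain ⟨i0, hi0mem, hi0max⟩ := Finset.exists_max_image _ d hsne
  have hvi0 : v i0 ≠ 0 := (Finset.mem_filter.mp hi0mem).2
  have hmax : ∀ i, v i ≠ 0 → d i ≤ d i0 := fun i hi =>
    hi0max i (Finset.mem_filter.mpr ⟨Finset.mem_univ i, hi⟩)
  set u : Fin m → F[X] :=
    fun i => if i = i0 then 0 else Polynomial.C (v i / v i0) * (X : F[X]) ^ (d i0 - d i) with hu
  have hui0 : u i0 = 0 := by simp [hu]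
  set C' := (1 + rowM i0 u) * C with hC'
  set T' := 1 + rowM i0 (-u) with hT'
  have hneg : (-u) i0 = 0 := by simp [hui0]
  have hrowM0 : ∀ w w' : Fin m → F[X], w + w' = 0 → rowM i0 (w + w') = 0 := by
    intro w w' hww
    rw [hww]
    refine Matrix.ext fun i j => ?_
    simp [rowM]
  have hT'T : T' * (1 + rowM i0 u) = 1 := by
    rw [hT', one_add_rowM_mul i0 _ _ hneg, hrowM0 _ _ (neg_add_cancel u), add_zero]
  have hTT' : (1 + rowM i0 u) * T' = 1 := by
    rw [hT', one_add_rowM_mul i0 _ _ hui0, hrowM0 _ _ (add_neg_cancel u), add_zero]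
  have hCeq : C = T' * C' := by
    rw [hC', ← Matrix.mul_assoc, hT'T, Matrix.one_mul]
  have hC'E' : C' * (E * T') = 1 := by
    have h1 : (1 + rowM i0 u) * C * (E * T') = (1 + rowM i0 u) * (C * E) * T' := by
      noncomm_ring
    rw [hC', h1, hCE, Matrix.mul_one, hTT']
  have hrow : ∀ i, i ≠ i0 → ∀ j, C' i j = C i j := by
    intro i hi j
    rw [hC', add_mul, Matrix.one_mul, Matrix.add_apply, rowM_mul_left, if_neg hi, add_zero]
  have hC'i0 : ∀ j, C' i0 j
      = ∑ k, Polynomial.C (v k / v i0) * ((X : F[X]) ^ (d i0 - d k) * C k j) := by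
    intro j
    rw [hC', add_mul, Matrix.one_mul, Matrix.add_apply, rowM_mul_left, if_pos rfl]
    have h1 : ∑ k, u k * C k j = ∑ k ∈ Finset.univ.erase i0,
        Polynomial.C (v k / v i0) * ((X : F[X]) ^ (d i0 - d k) * C k j) := by
      rw [← Finset.sum_erase (a := i0) (f := fun k => u k * C k j) Finset.univ
        (by simp only [hui0, zero_mul])]
      refine Finset.sum_congr rfl fun k hk => ?_
      rw [hu]
      simp only [if_neg (Finset.ne_of_mem_erase hk)]
      rw [mul_assoc]
    rw [h1, ← Finset.add_sum_erase _ _ (Finset.mem_univ i0)]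
    congr 1
    rw [div_self hvi0, map_one, one_mul, Nat.sub_self, pow_zero, one_mul]
  have hbound : ∀ j, (C' i0 j).natDegree ≤ d i0 := by
    intro j
    rw [hC'i0 j]
    refine natDegree_sum_le_of_forall_le _ _ fun k _ => ?_
    by_cases hk : v k = 0
    · simp [hk]
    · have hdk := hmax k hk
      have h1 : (C k j).natDegree ≤ d k := natDegree_le_rdeg C k j
      have h2 := Polynomial.natDegree_mul_le
        (p := Polynomial.C (v k / v i0)) (q := (X : F[X]) ^ (d i0 - d k) * C k j)
      have h3 := Polynomial.natDegree_mul_le (p := (X : F[X]) ^ (d i0 - d k)) (q := C k j)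
      simp only [Polynomial.natDegree_C, Polynomial.natDegree_X_pow, zero_add] at h2 h3
      omega
  have hvLj : ∀ j, ∑ k, v k * L k j = 0 := by
    intro j
    have := congrFun hvL j
    simpa [Matrix.vecMul, dotProduct] using this
  have hcoeff0 : ∀ j, (C' i0 j).coeff (d i0) = 0 := by
    intro j
    rw [hC'i0 j, Polynomial.finset_sum_coeff]
    have hterm : ∀ k,
        (Polynomial.C (v k / v i0) * ((X : F[X]) ^ (d i0 - d k) * C k j)).coeff (d i0)
          = (v k / v i0) * L k j := by
      intro k
      rw [Polynomial.coeff_C_mul]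
      by_cases hk : v k = 0
      · simp [hk]
      · have hdk := hmax k hk
        congr 1
        set e := d i0 - d k with hee
        have he : d i0 = d k + e := by omega
        rw [he, Polynomial.coeff_X_pow_mul]
        rw [hL]
        rfl
    rw [Finset.sum_congr rfl fun k _ => hterm k]
    have hdiv : ∀ k, (v k / v i0) * L k j = v k * L k j * (v i0)⁻¹ := fun k => by
      rw [div_eq_mul_inv]; ring
    simp only [hdiv, ← Finset.sum_mul, hvLj j, zero_mul]
  by_cases hdi0 : d i0 = 0
  · exfalso
    have hzero : ∀ j, C' i0 j = 0 := by
      intro j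
      have h1 : (C' i0 j).natDegree = 0 := Nat.le_zero.mp (hdi0 ▸ hbound j)
      have h2 := Polynomial.eq_C_of_natDegree_eq_zero h1
      have h3 := hcoeff0 j
      rw [hdi0] at h3
      rw [h2, h3, map_zero]
    have hdet0 : C'.det = 0 := Matrix.det_eq_zero_of_row_eq_zero i0 hzero
    have hunit : C'.det * (E * T').det = 1 := by
      rw [← Matrix.det_mul, hC'E', Matrix.det_one]
    rw [hdet0, zero_mul] at hunit
    exact one_ne_zero hunit.symm
  · refine ⟨T', C', E * T', hCeq, hC'E', ?_, ?_⟩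
    · have hlt : rdeg C' i0 < d i0 := by
        refine (Finset.sup_lt_iff
          (show (⊥ : ℕ) < d i0 by exact Nat.pos_of_ne_zero hdi0)).mpr fun j _ => ?_
        rcases eq_or_ne (C' i0 j) 0 with h | h
        · simpa [h] using Nat.pos_of_ne_zero hdi0
        · refine lt_of_le_of_ne (hbound j) fun hEq => ?_
          have hlead := Polynomial.leadingCoeff_ne_zero.mpr h
          exact hlead (by rw [Polynomial.leadingCoeff, hEq]; exact hcoeff0 j)
      have hle : ∀ i, rdeg C' i ≤ rdeg C i := by
        intro i
        rcases eq_or_ne i i0 with rfl | hne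
        · exact hlt.le
        · have : rdeg C' i = rdeg C i :=
            Finset.sup_congr rfl fun j _ => by rw [hrow i hne j]
          exact this.le
      exact Finset.sum_lt_sum (fun i _ => hle i) ⟨i0, Finset.mem_univ i0, hlt⟩
    · rw [hT']
      exact row_mem i0 (-u) hneg

lemma elim : ∀ (n : ℕ) (C E : Matrix (Fin m) (Fin m) F[X]), mu C ≤ n → C * E = 1 →
    C ∈ Submonoid.closure (SGen (F := F) (m := m)) := by
  intro n
  induction n with
  | zero => exact fun C E h hCE => const_mem C E (Nat.le_zero.mp h) hCE
  | succ n ih =>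
    intro C E h hCE
    by_cases h0 : mu C = 0
    · exact const_mem C E h0 hCE
    · obtain ⟨T', C', E', hC, hC'E', hlt, hT'⟩ :=
        reduce C E hCE (Nat.one_le_iff_ne_zero.mpr h0)
      rw [hC]
      exact mul_mem hT' (ih C' E' (by omega) hC'E')

lemma fac_mul_fac' (p : Matrix (Fin m) (Fin m) F × ℕ) (hp : p.1 ^ 2 = 0) :
    fac p * fac' p = 1 := by
  rw [fac_eq, fac'_eq, sub_eq_add_neg (1 : Matrix (Fin m) (Fin m) F[X]), ← neg_smul,
    one_add_smul_mul _ _ _ (sq_map _ hp), add_neg_cancel, zero_smul, add_zero]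

lemma prod_fac_fac' : ∀ L : List (Matrix (Fin m) (Fin m) F × ℕ), (∀ p ∈ L, p.1 ^ 2 = 0) →
    (L.map fac).prod * ((L.map fac').reverse).prod = 1
  | [], _ => by simp
  | p :: t, h => by
    rw [List.map_cons, List.map_cons, List.prod_cons, List.reverse_cons, List.prod_append,
      List.prod_singleton]
    have ht := prod_fac_fac' t fun q hq => h q (List.mem_cons_of_mem _ hq)
    have hp : fac p * fac' p = 1 := fac_mul_fac' p (h p (List.mem_cons_self))
    calc fac p * (t.map fac).prod * (((t.map fac').reverse).prod * fac' p)
        = fac p * ((t.map fac).prod * ((t.map fac').reverse).prod) * fac' p := by noncomm_ring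
      _ = 1 := by rw [ht, mul_one, hp]

lemma list_id (L : List (Matrix (Fin m) (Fin m) F × ℕ))
    (f : Matrix (Fin m) (Fin m) F × ℕ → Matrix (Fin m) (Fin m) F[X]) :
    ((List.finRange L.length).map fun i => f (L.get i)) = L.map f := by
  rw [← List.ofFn_eq_map]
  have h := List.map_ofFn (f := L.get) (g := f)
  rw [List.ofFn_get] at h
  rw [h]
  rfl

lemma rev_list_id (L : List (Matrix (Fin m) (Fin m) F × ℕ))
    (f : Matrix (Fin m) (Fin m) F × ℕ → Matrix (Fin m) (Fin m) F[X]) :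
    ((List.finRange L.reverse.length).reverse.map fun i => f (L.reverse.get i)) = L.map f := by
  rw [List.map_reverse, list_id L.reverse f, List.map_reverse, List.reverse_reverse]

end PseudoId


open PseudoId in
/-- Necessity direction of Theorem 3.1, the main result of the paper: every
pseudoidentity matrix pair of rank `m ≥ 2` factors completely into primitive factors
built from square-zero nilpotent matrices. -/
theorem pseudoidentity_factorization {F : Type*} [Field F] {m : ℕ} (hm : 2 ≤ m)
    (C E : Matrix (Fin m) (Fin m) F[X])
    (hCE : C * E = 1)
    (hC1 : C.map (Polynomial.eval (1 : F)) = 1) :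
    ∃ (r : ℕ) (N : Fin r → Matrix (Fin m) (Fin m) F) (k : Fin r → ℕ),
      (∀ i, N i ^ 2 = 0) ∧ (∀ i, 1 ≤ k i) ∧
      C = (((List.finRange r).reverse).map
        (fun i => (1 : Matrix (Fin m) (Fin m) F[X]) - (N i).map Polynomial.C
          + (X : F[X]) ^ (k i) • (N i).map Polynomial.C)).prod ∧
      E = ((List.finRange r).map
        (fun i => (1 : Matrix (Fin m) (Fin m) F[X]) + (N i).map Polynomial.C
          - (X : F[X]) ^ (k i) • (N i).map Polynomial.C)).prod := by
  classical
  have hC : IsProd C := isProd_of_mem_closure (elim (mu C) C E le_rfl hCE) hC1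
  obtain ⟨L0, hL0, hCprod⟩ := hC
  refine ⟨L0.reverse.length, fun i => (L0.reverse.get i).1, fun i => (L0.reverse.get i).2,
    ?_, ?_, ?_, ?_⟩
  · exact fun i => (hL0 _ (List.mem_reverse.mp (List.get_mem L0.reverse i))).1
  · exact fun i => (hL0 _ (List.mem_reverse.mp (List.get_mem L0.reverse i))).2
  · have h1 : (fun i : Fin L0.reverse.length =>
        (1 : Matrix (Fin m) (Fin m) F[X]) - ((L0.reverse.get i).1).map Polynomial.C
          + (X : F[X]) ^ ((L0.reverse.get i).2) • ((L0.reverse.get i).1).map Polynomial.C)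
        = fun i => fac (L0.reverse.get i) := rfl
    rw [h1, rev_list_id L0 fac]
    exact hCprod
  · have h1 : (fun i : Fin L0.reverse.length =>
        (1 : Matrix (Fin m) (Fin m) F[X]) + ((L0.reverse.get i).1).map Polynomial.C
          - (X : F[X]) ^ ((L0.reverse.get i).2) • ((L0.reverse.get i).1).map Polynomial.C)
        = fun i => fac' (L0.reverse.get i) := rfl
    rw [h1, list_id L0.reverse fac', List.map_reverse]
    have hfinal : C * ((L0.map fac').reverse).prod = 1 := by
      rw [hCprod]
      exact prod_fac_fac' L0 fun p hp => (hL0 p hp).1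
    have hEC : E * C = 1 := mul_eq_one_comm.mp hCE
    calc E = E * (C * ((L0.map fac').reverse).prod) := by rw [hfinal, mul_one]
      _ = (E * C) * ((L0.map fac').reverse).prod := by rw [mul_assoc]
      _ = ((L0.map fac').reverse).prod := by rw [hEC, one_mul]
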